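/- Let i and j be two nodes of the discrete Bass realization. For every ω in the cube [0,1]^{N×M}, the joint nonadoption indicator satisfies the correlation inequality ∫ G_i(ω) G_j(ω) dμ(ω) ≥ (∫ G_i(ω) dμ(ω)) · (∫ G_j(ω) dμ(ω)), where the integrals are over the cube [0,1]^{N×M} with the uniform probability measure μ. (This is the discrete-time form of the inequality [S_{i,j}](t) ≥ [S_i](t)·[S_j](t) for the Bass model: the probability that both i and j are nonadopters is at least the product of their individual nonadoption probabilities.) -/

import Mathlib

open MeasureTheory


/-- Positive association property (conclusion of Harris/FKG inequality). -/
def PosAssoc {α : Type*} [MeasurableSpace α] [Preorder α] (μ : Measure α) : Prop :=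
  ∀ f g : α → ℝ, Measurable f → Measurable g → Monotone f → Monotone g →
    (∀ x, f x ∈ Set.Icc (0:ℝ) 1) → (∀ x, g x ∈ Set.Icc (0:ℝ) 1) →
    (∫ x, f x ∂μ) * (∫ x, g x ∂μ) ≤ ∫ x, f x * g x ∂μ

lemma integrable_of_icc {α : Type*} [MeasurableSpace α] (μ : Measure α) [IsFiniteMeasure μ]
    {f : α → ℝ} (hf : Measurable f) (hb : ∀ x, f x ∈ Set.Icc (0:ℝ) 1) : Integrable f μ := by
  refine ⟨hf.aestronglyMeasurable, HasFiniteIntegral.of_bounded (C := 1) (ae_of_all _ fun x => ?_)⟩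
  rw [Real.norm_eq_abs, abs_le]
  exact ⟨le_trans (by norm_num) (hb x).1, (hb x).2⟩

lemma mul_mem_icc {a b : ℝ} (ha : a ∈ Set.Icc (0:ℝ) 1) (hb : b ∈ Set.Icc (0:ℝ) 1) :
    a * b ∈ Set.Icc (0:ℝ) 1 :=
  ⟨mul_nonneg ha.1 hb.1, mul_le_one₀ ha.2 hb.1 hb.2⟩

lemma integral_mem_icc {α : Type*} [MeasurableSpace α] (μ : Measure α) [IsProbabilityMeasure μ]
    {f : α → ℝ} (hf : Measurable f) (hb : ∀ x, f x ∈ Set.Icc (0:ℝ) 1) :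
    (∫ x, f x ∂μ) ∈ Set.Icc (0:ℝ) 1 := by
  constructor
  · exact integral_nonneg fun x => (hb x).1
  · calc ∫ x, f x ∂μ ≤ ∫ _, (1:ℝ) ∂μ :=
          integral_mono (integrable_of_icc μ hf hb) (integrable_const 1) fun x => (hb x).2
      _ = 1 := by simp

/-- Chebyshev's correlation inequality: any probability measure on a linear order is
positively associated. -/
lemma posAssoc_of_linearOrder {α : Type*} [MeasurableSpace α] [LinearOrder α]
    (μ : Measure α) [IsProbabilityMeasure μ] : PosAssoc μ := by
  intro f g hf hg hfm hgm hfb hgb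
  have hif : Integrable f μ := integrable_of_icc μ hf hfb
  have hig : Integrable g μ := integrable_of_icc μ hg hgb
  have hifg : Integrable (fun x => f x * g x) μ :=
    integrable_of_icc μ (hf.mul hg) fun x => mul_mem_icc (hfb x) (hgb x)
  set If := ∫ x, f x ∂μ with hIf
  set Ig := ∫ x, g x ∂μ with hIg
  set Ifg := ∫ x, f x * g x ∂μ with hIfg
  have key : ∀ x, 0 ≤ f x * g x - f x * Ig - g x * If + Ifg := by
    intro x
    have h1 : 0 ≤ ∫ y, (f x - f y) * (g x - g y) ∂μ := by
      refine integral_nonneg fun y => ?_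
      rcases le_total x y with h | h
      · exact mul_nonneg_iff.2 (Or.inr ⟨by linarith [hfm h], by linarith [hgm h]⟩)
      · exact mul_nonneg (by linarith [hfm h]) (by linarith [hgm h])
    have h2 : ∫ y, (f x - f y) * (g x - g y) ∂μ
        = f x * g x - f x * Ig - g x * If + Ifg := by
      have e : (fun y => (f x - f y) * (g x - g y))
          = fun y => (f x * g x - f x * g y - g x * f y) + f y * g y := by
        funext y; ring
      have i1 : Integrable (fun y => f x * g x - f x * g y) μ :=
        (integrable_const _).sub (hig.const_mul _)
      have i2 : Integrable (fun y => f x * g x - f x * g y - g x * f y) μ :=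
        i1.sub (hif.const_mul _)
      rw [e, integral_add i2 hifg, integral_sub i1 (hif.const_mul _),
        integral_sub (integrable_const _) (hig.const_mul _), integral_const,
        integral_const_mul, integral_const_mul]
      simp [hIf, hIg, hIfg]
    linarith [h2 ▸ h1]
  have h3 : 0 ≤ ∫ x, (f x * g x - f x * Ig - g x * If + Ifg) ∂μ :=
    integral_nonneg key
  have h4 : ∫ x, (f x * g x - f x * Ig - g x * If + Ifg) ∂μ
      = Ifg - If * Ig - Ig * If + Ifg := by
    have i1 : Integrable (fun x => f x * g x - f x * Ig) μ := hifg.sub (hif.mul_const _)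
    have i2 : Integrable (fun x => f x * g x - f x * Ig - g x * If) μ := i1.sub (hig.mul_const _)
    rw [integral_add i2 (integrable_const _), integral_sub i1 (hig.mul_const _),
      integral_sub hifg (hif.mul_const _), integral_const,
      integral_mul_const, integral_mul_const]
    simp [hIf, hIg, hIfg]
  rw [h4] at h3
  linarith

section Prod
variable {α β : Type*} [MeasurableSpace α] [Preorder α] [MeasurableSpace β] [Preorder β]

/-- Positive association is preserved under products of probability measures. -/
lemma PosAssoc.prod (μ : Measure α) (ν : Measure β)
    [IsProbabilityMeasure μ] [IsProbabilityMeasure ν]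
    (hμ : PosAssoc μ) (hν : PosAssoc ν) : PosAssoc (μ.prod ν) := by
  intro f g hf hg hfm hgm hfb hgb
  set F : α → ℝ := fun x => ∫ y, f (x, y) ∂ν with hF
  set G : α → ℝ := fun x => ∫ y, g (x, y) ∂ν with hG
  have hfx : ∀ x : α, Measurable fun y => f (x, y) := fun x => hf.comp measurable_prodMk_left
  have hgx : ∀ x : α, Measurable fun y => g (x, y) := fun x => hg.comp measurable_prodMk_left
  have hFmeas : Measurable F := hf.stronglyMeasurable.integral_prod_right'.measurable
  have hGmeas : Measurable G := hg.stronglyMeasurable.integral_prod_right'.measurable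
  have hFb : ∀ x, F x ∈ Set.Icc (0:ℝ) 1 := fun x =>
    integral_mem_icc ν (hfx x) fun y => hfb (x, y)
  have hGb : ∀ x, G x ∈ Set.Icc (0:ℝ) 1 := fun x =>
    integral_mem_icc ν (hgx x) fun y => hgb (x, y)
  have hFmono : Monotone F := by
    intro a b hab
    exact integral_mono (integrable_of_icc ν (hfx a) fun y => hfb _)
      (integrable_of_icc ν (hfx b) fun y => hfb _)
      (fun y => hfm (Prod.mk_le_mk.2 ⟨hab, le_rfl⟩))
  have hGmono : Monotone G := by
    intro a b hab
    exact integral_mono (integrable_of_icc ν (hgx a) fun y => hgb _)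
      (integrable_of_icc ν (hgx b) fun y => hgb _)
      (fun y => hgm (Prod.mk_le_mk.2 ⟨hab, le_rfl⟩))
  have hfgmeas : Measurable fun z : α × β => f z * g z := hf.mul hg
  have hfgb : ∀ z, f z * g z ∈ Set.Icc (0:ℝ) 1 := fun z => mul_mem_icc (hfb z) (hgb z)
  have step1 : ∀ x, F x * G x ≤ ∫ y, f (x, y) * g (x, y) ∂ν := fun x =>
    hν _ _ (hfx x) (hgx x) (fun a b hab => hfm (Prod.mk_le_mk.2 ⟨le_rfl, hab⟩))
      (fun a b hab => hgm (Prod.mk_le_mk.2 ⟨le_rfl, hab⟩))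
      (fun y => hfb (x, y)) (fun y => hgb (x, y))
  have hinner_meas : Measurable fun x => ∫ y, f (x, y) * g (x, y) ∂ν :=
    hfgmeas.stronglyMeasurable.integral_prod_right'.measurable
  have hinner_b : ∀ x, (∫ y, f (x, y) * g (x, y) ∂ν) ∈ Set.Icc (0:ℝ) 1 := fun x =>
    integral_mem_icc ν ((hfx x).mul (hgx x)) fun y => hfgb (x, y)
  calc (∫ z, f z ∂μ.prod ν) * ∫ z, g z ∂μ.prod ν
      = (∫ x, F x ∂μ) * ∫ x, G x ∂μ := by
        rw [integral_prod f (integrable_of_icc _ hf hfb),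
          integral_prod g (integrable_of_icc _ hg hgb)]
    _ ≤ ∫ x, F x * G x ∂μ := hμ F G hFmeas hGmeas hFmono hGmono hFb hGb
    _ ≤ ∫ x, ∫ y, f (x, y) * g (x, y) ∂ν ∂μ := by
        refine integral_mono (integrable_of_icc μ (hFmeas.mul hGmeas)
          fun x => mul_mem_icc (hFb x) (hGb x))
          (integrable_of_icc μ hinner_meas hinner_b) step1
    _ = ∫ z, f z * g z ∂μ.prod ν :=
        (integral_prod _ (integrable_of_icc _ hfgmeas hfgb)).symm

end Prod

section Equiv

/-- Transfer of positive association along a measure-preserving order-preserving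
measurable equivalence. -/
lemma PosAssoc.comap {α β : Type*} [MeasurableSpace α] [Preorder α]
    [MeasurableSpace β] [Preorder β] {μ : Measure α} {ν : Measure β}
    (e : α ≃ᵐ β) (hmp : MeasurePreserving e μ ν)
    (he : Monotone e) (hes : Monotone e.symm) (h : PosAssoc ν) : PosAssoc μ := by
  intro f g hf hg hfm hgm hfb hgb
  have key : ∀ (u : α → ℝ), Measurable u →
      ∫ x, u x ∂μ = ∫ y, u (e.symm y) ∂ν := by
    intro u hu
    rw [← hmp.map_eq, integral_map e.measurable.aemeasurable
      (Measurable.aestronglyMeasurable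
        (show Measurable fun y => u (e.symm y) from hu.comp e.symm.measurable))]
    simp
  rw [key f hf, key g hg, key (fun x => f x * g x) (hf.mul hg)]
  exact h (fun y => f (e.symm y)) (fun y => g (e.symm y))
    (hf.comp e.symm.measurable) (hg.comp e.symm.measurable)
    (hfm.comp hes) (hgm.comp hes) (fun y => hfb _) (fun y => hgb _)

end Equiv

section Pi

universe u

/-- Harris inequality: a finite product of positively associated probability measures is
positively associated. -/
lemma posAssoc_pi : ∀ (n : ℕ) (α : Fin n → Type u) [∀ i, MeasurableSpace (α i)]
    [∀ i, Preorder (α i)] (μ : ∀ i, Measure (α i)) [∀ i, IsProbabilityMeasure (μ i)],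
    (∀ i, PosAssoc (μ i)) → PosAssoc (Measure.pi μ) := by
  intro n
  induction n with
  | zero =>
    intro α mα pα μ hpμ h f g hf hg hfm hgm hfb hgb
    haveI := hpμ
    have hu : ∀ u : (∀ i, α i) → ℝ, ∫ x, u x ∂Measure.pi μ = u default := by
      intro u
      rw [integral_unique]
      simp
    rw [hu, hu, hu]
  | succ n ih =>
    intro α mα pα μ hpμ h
    haveI := hpμ
    have hprod : PosAssoc ((μ 0).prod (Measure.pi fun j => μ (Fin.succAbove 0 j))) :=
      PosAssoc.prod _ _ (h 0) (ih _ _ fun j => h _)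
    refine PosAssoc.comap (MeasurableEquiv.piFinSuccAbove α 0)
      (measurePreserving_piFinSuccAbove μ 0) ?_ ?_ hprod
    · intro a b hab
      simp only [MeasurableEquiv.piFinSuccAbove_apply]
      exact ⟨hab 0, fun j => hab _⟩
    · rintro ⟨a, b⟩ ⟨c, d⟩ ⟨h1, h2⟩
      intro j
      simp only [MeasurableEquiv.piFinSuccAbove_symm_apply]
      refine Fin.succAboveCases 0 ?_ ?_ j
      · exact h1
      · intro k
        exact h2 k

end Pi

/-- Discrete Bass realization: adoption state of node `j` after `n` time steps,
for the realization `ω : Fin N → Fin M → ℝ` of the uniform variables. -/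
noncomputable def bassX (M N : ℕ) (dt : ℝ) (p : Fin M → ℝ) (q : Fin M → Fin M → ℝ)
    (ω : Fin N → Fin M → ℝ) : ℕ → Fin M → Bool
  | 0, _ => false
  | n + 1, j =>
    if h : n < N then
      bassX M N dt p q ω n j ||
        (if ω ⟨n, h⟩ j ≤
            (p j + ∑ k, q k j * (if bassX M N dt p q ω n k = true then (1 : ℝ) else 0)) * dt
          then true else false)
    else
      bassX M N dt p q ω n j

/-- Nonadoption indicator of node `i` after `N` steps. -/
noncomputable def bassG (M N : ℕ) (dt : ℝ) (p : Fin M → ℝ) (q : Fin M → Fin M → ℝ)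
    (i : Fin M) (ω : Fin N → Fin M → ℝ) : ℝ :=
  if bassX M N dt p q ω N i = false then 1 else 0

/-- Uniform probability measure on the cube `[0,1]^{N×M}`. -/
noncomputable def cubeMeasure (N M : ℕ) : Measure (Fin N → Fin M → ℝ) :=
  Measure.pi fun _ => Measure.pi fun _ => volume.restrict (Set.Icc (0 : ℝ) 1)

section Bass

variable {M N : ℕ} {dt : ℝ} {p : Fin M → ℝ} {q : Fin M → Fin M → ℝ}

lemma bassX_mono (hdt : 0 ≤ dt) (hq : ∀ k j, 0 ≤ q k j)
    {ω ω' : Fin N → Fin M → ℝ} (hω : ω ≤ ω') :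
    ∀ n j, bassX M N dt p q ω' n j = true → bassX M N dt p q ω n j = true := by
  intro n
  induction n with
  | zero => intro j h; simp [bassX] at h
  | succ n ih =>
    intro j h
    by_cases hn : n < N
    · simp only [bassX, hn, dif_pos, Bool.or_eq_true] at h ⊢
      rcases h with h | h
      · exact Or.inl (ih j h)
      · right
        have hc : ω' ⟨n, hn⟩ j ≤
            (p j + ∑ k, q k j * (if bassX M N dt p q ω' n k = true then (1:ℝ) else 0)) * dt := by
          by_contra hc
          rw [if_neg hc] at h
          exact Bool.false_ne_true h
        have hsum : (∑ k, q k j * (if bassX M N dt p q ω' n k = true then (1:ℝ) else 0))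
            ≤ ∑ k, q k j * (if bassX M N dt p q ω n k = true then (1:ℝ) else 0) := by
          refine Finset.sum_le_sum fun k _ => mul_le_mul_of_nonneg_left ?_ (hq k j)
          by_cases h' : bassX M N dt p q ω' n k = true
          · rw [if_pos h', if_pos (ih k h')]
          · rw [if_neg h']
            split <;> norm_num
        have hle : ω ⟨n, hn⟩ j ≤
            (p j + ∑ k, q k j * (if bassX M N dt p q ω n k = true then (1:ℝ) else 0)) * dt :=
          le_trans (hω _ _) (le_trans hc
            (mul_le_mul_of_nonneg_right (by linarith) hdt))
        rw [if_pos hle]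
    · simp only [bassX, hn, dif_neg, not_false_iff] at h ⊢
      exact ih j h

lemma measurableSet_bassX (M N : ℕ) (dt : ℝ) (p : Fin M → ℝ) (q : Fin M → Fin M → ℝ) :
    ∀ (n : ℕ) (j : Fin M),
      MeasurableSet {ω : Fin N → Fin M → ℝ | bassX M N dt p q ω n j = true} := by
  intro n
  induction n with
  | zero => intro j; simp [bassX]
  | succ n ih =>
    intro j
    by_cases hn : n < N
    · have hset : {ω : Fin N → Fin M → ℝ | bassX M N dt p q ω (n+1) j = true}
          = {ω | bassX M N dt p q ω n j = true} ∪
            {ω | ω ⟨n, hn⟩ j ≤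
              (p j + ∑ k, q k j * (if bassX M N dt p q ω n k = true then (1:ℝ) else 0)) * dt} := by
        ext ω
        simp only [Set.mem_setOf_eq, Set.mem_union, bassX, hn, dif_pos, Bool.or_eq_true]
        constructor
        · rintro (h | h)
          · exact Or.inl h
          · right
            by_contra hc
            rw [if_neg hc] at h
            exact Bool.false_ne_true h
        · rintro (h | h)
          · exact Or.inl h
          · exact Or.inr (by rw [if_pos h])
      rw [hset]
      refine (ih j).union ?_
      refine measurableSet_le ((measurable_pi_apply j).comp (measurable_pi_apply (⟨n, hn⟩ : Fin N))) ?_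
      refine Measurable.mul_const (Measurable.const_add ?_ _) _
      refine Finset.measurable_sum _ fun k _ => Measurable.const_mul ?_ _
      exact Measurable.ite (ih k) measurable_const measurable_const
    · have hset : {ω : Fin N → Fin M → ℝ | bassX M N dt p q ω (n+1) j = true}
          = {ω | bassX M N dt p q ω n j = true} := by
        ext ω
        simp only [Set.mem_setOf_eq, bassX, hn, dif_neg, not_false_iff]
      rw [hset]
      exact ih j

lemma measurable_bassG (M N : ℕ) (dt : ℝ) (p : Fin M → ℝ) (q : Fin M → Fin M → ℝ) (i : Fin M) :
    Measurable (bassG M N dt p q i) := by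
  unfold bassG
  refine Measurable.ite ?_ measurable_const measurable_const
  have := (measurableSet_bassX M N dt p q N i).compl
  convert this using 1
  ext ω
  simp

lemma monotone_bassG (hdt : 0 ≤ dt) (hq : ∀ k j, 0 ≤ q k j) (i : Fin M) :
    Monotone (bassG M N dt p q i) := by
  intro ω ω' hω
  unfold bassG
  by_cases h : bassX M N dt p q ω' N i = true
  · have h2 := bassX_mono hdt hq hω N i h
    simp [h, h2]
  · have : bassG M N dt p q i ω ≤ 1 := by unfold bassG; split <;> norm_num
    unfold bassG at this
    simp only [Bool.not_eq_true] at h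
    rw [if_pos h]
    exact this

lemma bassG_mem_icc (M N : ℕ) (dt : ℝ) (p : Fin M → ℝ) (q : Fin M → Fin M → ℝ) (i : Fin M)
    (ω : Fin N → Fin M → ℝ) : bassG M N dt p q i ω ∈ Set.Icc (0:ℝ) 1 := by
  unfold bassG; split <;> norm_num

end Bass

/-- The probability that both `i` and `j` are nonadopters is at least the product of
their individual nonadoption probabilities: `[S_{i,j}] ≥ [S_i]·[S_j]` in discrete time. -/
theorem bass_nonadoption_product_inequality
    (M N : ℕ) (hM : 1 ≤ M) (hN : 1 ≤ N) (dt : ℝ) (hdt : 0 < dt)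
    (p : Fin M → ℝ) (hp : ∀ j, 0 ≤ p j)
    (q : Fin M → Fin M → ℝ) (hq : ∀ k j, 0 ≤ q k j) (hqdiag : ∀ j, q j j = 0)
    (i j : Fin M) :
    ∫ ω, bassG M N dt p q i ω * bassG M N dt p q j ω ∂(cubeMeasure N M) ≥
      (∫ ω, bassG M N dt p q i ω ∂(cubeMeasure N M)) *
        (∫ ω, bassG M N dt p q j ω ∂(cubeMeasure N M)) := by
  haveI h1 : IsProbabilityMeasure ((volume : Measure ℝ).restrict (Set.Icc 0 1)) :=
    ⟨by simp [Real.volume_Icc]⟩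
  have hPA : PosAssoc (cubeMeasure N M) := by
    rw [cubeMeasure]
    exact posAssoc_pi N (fun _ => Fin M → ℝ)
      (fun _ => Measure.pi fun _ => volume.restrict (Set.Icc (0:ℝ) 1))
      (fun _ => posAssoc_pi M (fun _ => ℝ) (fun _ => volume.restrict (Set.Icc (0:ℝ) 1))
        (fun _ => posAssoc_of_linearOrder _))
  exact hPA (bassG M N dt p q i) (bassG M N dt p q j)
    (measurable_bassG M N dt p q i) (measurable_bassG M N dt p q j)
    (monotone_bassG hdt.le hq i) (monotone_bassG hdt.le hq j)
    (bassG_mem_icc M N dt p q i) (bassG_mem_icc M N dt p q j)
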